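/- Splitting of logarithmic derivations for separated variables: let $\mathcal{O} = \mathbb{C}[[x_1,\dots,x_n,y_1,\dots,y_m]]$, let $g \in \mathbb{C}[[x_1,\dots,x_n]] \subseteq \mathcal{O}$ and $h \in \mathbb{C}[[y_1,\dots,y_m]] \subseteq \mathcal{O}$ be reduced. Then every logarithmic derivation $\delta \in \mathrm{Der}(\log gh)$ decomposes uniquely as $\delta = \delta_1 + \delta_2$, where $\delta_1$ lies in the $\mathcal{O}$-span of $\partial_{x_1},\dots,\partial_{x_n}$ and satisfies $\delta_1(g) \in (g)$, and $\delta_2$ lies in the $\mathcal{O}$-span of $\partial_{y_1},\dots,\partial_{y_m}$ and satisfies $\delta_2(h) \in (h)$; that is, $\mathrm{Der}(\log gh)$ is the direct sum of these two submodules. -/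

import Mathlib

set_option maxHeartbeats 1000000
set_option synthInstance.maxHeartbeats 400000
set_option linter.unusedSectionVars false

open MvPowerSeries Finset

section Core

variable {σ : Type*} [DecidableEq σ]

/-- Formal partial derivative of a multivariate power series with respect to the
variable `i`. -/
noncomputable def pderiv (i : σ) (f : MvPowerSeries σ ℂ) : MvPowerSeries σ ℂ :=
  fun m => ((m i : ℂ) + 1) * MvPowerSeries.coeff (m + Finsupp.single i 1) f

theorem coeff_pderiv (i : σ) (f : MvPowerSeries σ ℂ) (m : σ →₀ ℕ) :
    MvPowerSeries.coeff m (pderiv i f) =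
      ((m i : ℂ) + 1) * MvPowerSeries.coeff (m + Finsupp.single i 1) f := rfl

private lemma pderiv_key (i : σ) (f g : MvPowerSeries σ ℂ) (m : σ →₀ ℕ) :
    (∑ p ∈ (antidiagonal (m + Finsupp.single i 1) : Finset ((σ →₀ ℕ) × (σ →₀ ℕ))),
        (p.2 i : ℂ) * (MvPowerSeries.coeff p.1 f * MvPowerSeries.coeff p.2 g))
      = ∑ q ∈ (antidiagonal m : Finset ((σ →₀ ℕ) × (σ →₀ ℕ))),
          MvPowerSeries.coeff q.1 f * MvPowerSeries.coeff q.2 (pderiv i g) := by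
  classical
  rw [← Finset.sum_filter_of_ne (p := fun p : (σ →₀ ℕ) × (σ →₀ ℕ) => p.2 i ≠ 0)
    (by
      intro p _ hp hzero
      apply hp
      rw [hzero]
      simp)]
  refine Finset.sum_nbij' (fun p => (p.1, p.2 - Finsupp.single i 1))
    (fun q => (q.1, q.2 + Finsupp.single i 1)) ?_ ?_ ?_ ?_ ?_
  · intro p hp
    simp only [Finset.mem_filter, Finset.HasAntidiagonal.mem_antidiagonal] at hp
    obtain ⟨hsum, hne⟩ := hp
    rw [Finset.HasAntidiagonal.mem_antidiagonal]
    ext j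
    have hj := DFunLike.congr_fun hsum j
    simp only [Finsupp.add_apply, Finsupp.tsub_apply, Finsupp.single_apply] at hj ⊢
    by_cases hji : i = j
    · subst hji
      simp at hj ⊢
      omega
    · simp only [if_neg hji] at hj ⊢
      omega
  · intro q hq
    rw [Finset.HasAntidiagonal.mem_antidiagonal] at hq
    simp only [Finset.mem_filter, Finset.HasAntidiagonal.mem_antidiagonal]
    constructor
    · rw [← hq]; abel
    · simp [Finsupp.add_apply, Finsupp.single_apply]
  · intro p hp
    simp only [Finset.mem_filter, Finset.HasAntidiagonal.mem_antidiagonal] at hp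
    obtain ⟨hsum, hne⟩ := hp
    have hle : Finsupp.single i 1 ≤ p.2 := by
      rw [Finsupp.single_le_iff]; omega
    simp [tsub_add_cancel_of_le hle]
  · intro q _
    simp
  · intro p hp
    simp only [Finset.mem_filter, Finset.HasAntidiagonal.mem_antidiagonal] at hp
    obtain ⟨hsum, hne⟩ := hp
    have hle : Finsupp.single i 1 ≤ p.2 := by
      rw [Finsupp.single_le_iff]; omega
    rw [_root_.coeff_pderiv, tsub_add_cancel_of_le hle]
    have h2 : (((p.2 - Finsupp.single i 1 : σ →₀ ℕ) i : ℕ) : ℂ) + 1 = (p.2 i : ℂ) := by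
      have hx : (p.2 - Finsupp.single i 1 : σ →₀ ℕ) i = p.2 i - 1 := by
        simp [Finsupp.tsub_apply]
      rw [hx]
      have h1 : 1 ≤ p.2 i := by omega
      push_cast [h1]
      ring
    rw [h2]
    ring

theorem pderiv_mul (i : σ) (f g : MvPowerSeries σ ℂ) :
    pderiv i (f * g) = f * pderiv i g + g * pderiv i f := by
  classical
  apply MvPowerSeries.ext
  intro m
  have e1 : MvPowerSeries.coeff m (pderiv i (f * g))
      = ∑ p ∈ (antidiagonal (m + Finsupp.single i 1) : Finset ((σ →₀ ℕ) × (σ →₀ ℕ))),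
          ((p.1 i : ℂ) * (MvPowerSeries.coeff p.1 f * MvPowerSeries.coeff p.2 g)
            + (p.2 i : ℂ) * (MvPowerSeries.coeff p.1 f * MvPowerSeries.coeff p.2 g)) := by
    rw [_root_.coeff_pderiv, coeff_mul, Finset.mul_sum]
    refine Finset.sum_congr rfl ?_
    intro p hp
    rw [Finset.HasAntidiagonal.mem_antidiagonal] at hp
    have hj := DFunLike.congr_fun hp i
    simp only [Finsupp.add_apply, Finsupp.single_apply, if_pos rfl] at hj
    have hc : (p.1 i : ℂ) + (p.2 i : ℂ) = (m i : ℂ) + 1 := by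
      exact_mod_cast congrArg (Nat.cast : ℕ → ℂ) hj
    rw [← hc, add_mul]
  have e3 : (∑ p ∈ (antidiagonal (m + Finsupp.single i 1) : Finset ((σ →₀ ℕ) × (σ →₀ ℕ))),
      (p.2 i : ℂ) * (MvPowerSeries.coeff p.1 f * MvPowerSeries.coeff p.2 g))
      = MvPowerSeries.coeff m (f * pderiv i g) := by
    rw [coeff_mul]
    exact pderiv_key i f g m
  have e4 : (∑ p ∈ (antidiagonal (m + Finsupp.single i 1) : Finset ((σ →₀ ℕ) × (σ →₀ ℕ))),
      (p.1 i : ℂ) * (MvPowerSeries.coeff p.1 f * MvPowerSeries.coeff p.2 g))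
      = MvPowerSeries.coeff m (g * pderiv i f) := by
    rw [coeff_mul, ← pderiv_key i g f m]
    refine Finset.sum_nbij' Prod.swap Prod.swap ?_ ?_ ?_ ?_ ?_
    · intro p hp
      rw [Finset.HasAntidiagonal.mem_antidiagonal] at hp ⊢
      rw [← hp]
      exact add_comm _ _
    · intro p hp
      rw [Finset.HasAntidiagonal.mem_antidiagonal] at hp ⊢
      rw [← hp]
      exact add_comm _ _
    · intro p _
      simp
    · intro p _
      simp
    · intro p _
      simp only [Prod.fst_swap, Prod.snd_swap]
      ring
  rw [map_add, e1, Finset.sum_add_distrib, e3, e4]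
  ring

theorem pderiv_add (i : σ) (f g : MvPowerSeries σ ℂ) :
    pderiv i (f + g) = pderiv i f + pderiv i g := by
  apply MvPowerSeries.ext
  intro m
  show ((m i : ℂ) + 1) * MvPowerSeries.coeff (m + Finsupp.single i 1) (f + g) = _
  rw [map_add, map_add]
  show _ = ((m i : ℂ) + 1) * _ + ((m i : ℂ) + 1) * _
  ring

theorem pderiv_smul (i : σ) (c : ℂ) (f : MvPowerSeries σ ℂ) :
    pderiv i (c • f) = c • pderiv i f := by
  apply MvPowerSeries.ext
  intro m
  show ((m i : ℂ) + 1) * MvPowerSeries.coeff (m + Finsupp.single i 1) (c • f) = _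
  rw [map_smul]
  show _ = c • (((m i : ℂ) + 1) * MvPowerSeries.coeff (m + Finsupp.single i 1) f)
  simp [smul_eq_mul]
  ring

/-- The formal partial derivative as a `ℂ`-linear derivation. -/
noncomputable def pderivD (i : σ) : Derivation ℂ (MvPowerSeries σ ℂ) (MvPowerSeries σ ℂ) where
  toFun := pderiv i
  map_add' := pderiv_add i
  map_smul' c f := by simpa using pderiv_smul i c f
  map_one_eq_zero' := by
    apply MvPowerSeries.ext
    intro m
    classical
    show ((m i : ℂ) + 1) * MvPowerSeries.coeff (m + Finsupp.single i 1) 1 = _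
    rw [MvPowerSeries.coeff_one]
    have : m + Finsupp.single i 1 ≠ 0 := by
      intro h
      have := DFunLike.congr_fun h i
      simp [Finsupp.add_apply, Finsupp.single_apply] at this
    rw [if_neg this]
    simp
  leibniz' f g := by
    simpa [smul_eq_mul] using pderiv_mul i f g

/-- The module of logarithmic derivations along the divisor defined by `f`. -/
noncomputable def logDer (f : MvPowerSeries σ ℂ) :
    Submodule (MvPowerSeries σ ℂ) (Derivation ℂ (MvPowerSeries σ ℂ) (MvPowerSeries σ ℂ)) where
  carrier := {δ | δ f ∈ Ideal.span {f}}
  add_mem' := by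
    intro a b ha hb
    simpa using Ideal.add_mem _ ha hb
  zero_mem' := by simp
  smul_mem' := by
    intro c δ hδ
    simpa [smul_eq_mul] using Ideal.mul_mem_left _ c hδ

/-- The Jacobian ideal of `f`: the ideal generated by all partial derivatives of `f`. -/
noncomputable def jacobianIdeal (f : MvPowerSeries σ ℂ) : Ideal (MvPowerSeries σ ℂ) :=
  Ideal.span (Set.range fun i => pderiv i f)

/-- `f` depends only on the variables in `s`. -/
def DependsOnlyOn (s : Set σ) (f : MvPowerSeries σ ℂ) : Prop :=
  ∀ m : σ →₀ ℕ, (∃ i ∉ s, m i ≠ 0) → MvPowerSeries.coeff m f = 0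

/-- `g` and `h` have no common irreducible factor. -/
def NoCommonFactor (g h : MvPowerSeries σ ℂ) : Prop :=
  ∀ p : MvPowerSeries σ ℂ, Irreducible p → p ∣ g → ¬ p ∣ h

-- ===== auxiliary lemmas about pderiv on X and pure series =====

theorem pderiv_X (i j : σ) :
    pderiv i (X j : MvPowerSeries σ ℂ) = if i = j then 1 else 0 := by
  classical
  by_cases hij : i = j
  · subst hij
    rw [if_pos rfl]
    apply MvPowerSeries.ext
    intro m
    rw [_root_.coeff_pderiv, MvPowerSeries.coeff_X, MvPowerSeries.coeff_one]
    by_cases hm : m = 0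
    · subst hm; simp
    · rw [if_neg hm, if_neg, mul_zero]
      intro hcon
      apply hm
      have := congrArg (fun t => t - Finsupp.single i 1) hcon
      simpa using this
  · rw [if_neg hij]
    apply MvPowerSeries.ext
    intro m
    rw [_root_.coeff_pderiv, MvPowerSeries.coeff_X, map_zero, if_neg, mul_zero]
    intro hcon
    have := DFunLike.congr_fun hcon i
    rw [Finsupp.add_apply, Finsupp.single_apply, Finsupp.single_apply, if_pos rfl,
      if_neg (fun hh => hij hh.symm)] at this
    omega

theorem pderiv_eq_zero_of_dependsOnlyOn (i : σ) (s : Set σ) (f : MvPowerSeries σ ℂ)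
    (hf : DependsOnlyOn s f) (hi : i ∉ s) : pderiv i f = 0 := by
  apply MvPowerSeries.ext
  intro m
  rw [_root_.coeff_pderiv, map_zero, hf (m + Finsupp.single i 1) ⟨i, hi, by simp⟩, mul_zero]

/-- Evaluation of a derivation at a fixed power series, as a linear map over the ring. -/
noncomputable def evalD (f : MvPowerSeries σ ℂ) :
    Derivation ℂ (MvPowerSeries σ ℂ) (MvPowerSeries σ ℂ) →ₗ[MvPowerSeries σ ℂ]
      MvPowerSeries σ ℂ where
  toFun δ := δ f
  map_add' _ _ := rfl
  map_smul' _ _ := rfl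

theorem apply_eq_zero_of_mem_span (S : Set (Derivation ℂ (MvPowerSeries σ ℂ) (MvPowerSeries σ ℂ)))
    (f : MvPowerSeries σ ℂ) (hS : ∀ d ∈ S, d f = 0)
    {δ : Derivation ℂ (MvPowerSeries σ ℂ) (MvPowerSeries σ ℂ)}
    (hδ : δ ∈ Submodule.span (MvPowerSeries σ ℂ) S) : δ f = 0 := by
  have hle : Submodule.span (MvPowerSeries σ ℂ) S ≤ LinearMap.ker (evalD f) :=
    Submodule.span_le.mpr (fun d hd => hS d hd)
  exact hle hδ

theorem eq_sum_of_mem_span {ι : Type*} [Fintype ι] (v : ι → σ) (hv : Function.Injective v)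
    {δ : Derivation ℂ (MvPowerSeries σ ℂ) (MvPowerSeries σ ℂ)}
    (hδ : δ ∈ Submodule.span (MvPowerSeries σ ℂ) (Set.range fun i => pderivD (v i))) :
    δ = ∑ i : ι, (δ (X (v i)) : MvPowerSeries σ ℂ) • pderivD (v i) := by
  classical
  set Ψ : Derivation ℂ (MvPowerSeries σ ℂ) (MvPowerSeries σ ℂ) →ₗ[MvPowerSeries σ ℂ]
      Derivation ℂ (MvPowerSeries σ ℂ) (MvPowerSeries σ ℂ) :=
    LinearMap.id - ∑ i : ι,
      (LinearMap.toSpanSingleton (MvPowerSeries σ ℂ) _ (pderivD (v i))).comp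
        (evalD (X (v i))) with hΨ
  have hker : Submodule.span (MvPowerSeries σ ℂ) (Set.range fun i => pderivD (v i)) ≤
      LinearMap.ker Ψ := by
    rw [Submodule.span_le]
    rintro _ ⟨i₀, rfl⟩
    simp only [SetLike.mem_coe, LinearMap.mem_ker, hΨ, LinearMap.sub_apply, LinearMap.id_apply,
      LinearMap.sum_apply, sub_eq_zero]
    have hterm : ∀ i : ι,
        ((LinearMap.toSpanSingleton (MvPowerSeries σ ℂ) _ (pderivD (v i))).comp
          (evalD (X (v i)))) (pderivD (v i₀))
        = if i₀ = i then pderivD (v i₀) else 0 := by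
      intro i
      have : (pderivD (v i₀) : Derivation ℂ (MvPowerSeries σ ℂ) (MvPowerSeries σ ℂ)) (X (v i))
          = if i₀ = i then 1 else 0 := by
        show pderiv (v i₀) (X (v i)) = _
        rw [_root_.pderiv_X]
        by_cases hii : i₀ = i
        · subst hii; simp
        · rw [if_neg (fun hcon => hii (hv hcon)), if_neg hii]
      rw [LinearMap.comp_apply, LinearMap.toSpanSingleton_apply]
      show (pderivD (v i₀) : Derivation ℂ (MvPowerSeries σ ℂ) (MvPowerSeries σ ℂ)) (X (v i)) •
        pderivD (v i) = _
      rw [this]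
      by_cases hii : i₀ = i
      · subst hii; simp
      · rw [if_neg hii, if_neg hii, zero_smul]
    have hsum : (∑ i : ι, ((LinearMap.toSpanSingleton (MvPowerSeries σ ℂ) _
            (pderivD (v i))).comp (evalD (X (v i)))) (pderivD (v i₀)))
        = pderivD (v i₀) := by
      rw [Finset.sum_congr rfl (fun i _ => hterm i), Finset.sum_ite_eq]
      simp
    exact hsum.symm
  have hz : Ψ δ = 0 := LinearMap.mem_ker.mp (hker hδ)
  rw [hΨ, LinearMap.sub_apply, LinearMap.id_apply, LinearMap.sum_apply, sub_eq_zero] at hz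
  conv_lhs => rw [hz]
  refine Finset.sum_congr rfl (fun i _ => ?_)
  rw [LinearMap.comp_apply, LinearMap.toSpanSingleton_apply]
  rfl

-- ===== total degree machinery =====

/-- Total degree of an exponent (finite variable set). -/
noncomputable def degE [Fintype σ] (μ : σ →₀ ℕ) : ℕ := ∑ k : σ, μ k

lemma degE_add [Fintype σ] (a b : σ →₀ ℕ) : degE (a + b) = degE a + degE b := by
  simp [degE, Finsupp.add_apply, Finset.sum_add_distrib]

lemma degE_single_one [Fintype σ] (k : σ) : degE (Finsupp.single k 1 : σ →₀ ℕ) = 1 := by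
  classical
  simp [degE, Finsupp.single_apply]

lemma apply_le_degE [Fintype σ] (μ : σ →₀ ℕ) (k : σ) : μ k ≤ degE μ :=
  Finset.single_le_sum (fun _ _ => Nat.zero_le _) (Finset.mem_univ k)

lemma degE_zero [Fintype σ] : degE (0 : σ →₀ ℕ) = 0 := by simp [degE]

lemma eq_zero_of_degE [Fintype σ] (μ : σ →₀ ℕ) (h : degE μ = 0) : μ = 0 := by
  ext k
  have h1 := apply_le_degE μ k
  simp only [Finsupp.coe_zero, Pi.zero_apply]
  omega

/-- A choice of a variable occurring in a nonzero exponent, as a total function to `Option`. -/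
noncomputable def pickVar (μ : σ →₀ ℕ) : Option σ :=
  if h : μ.support.Nonempty then some h.choose else none

lemma pickVar_spec {μ : σ →₀ ℕ} {k : σ} (h : pickVar μ = some k) : μ k ≠ 0 := by
  by_cases hne : μ.support.Nonempty
  · rw [pickVar, dif_pos hne, Option.some_inj] at h
    rw [← h]
    exact Finsupp.mem_support_iff.mp hne.choose_spec
  · rw [pickVar, dif_neg hne] at h
    cases h

lemma pickVar_ne_none {μ : σ →₀ ℕ} (h : μ ≠ 0) : ∃ k, pickVar μ = some k := by
  have hne : μ.support.Nonempty := Finsupp.support_nonempty_iff.mpr h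
  exact ⟨hne.choose, by rw [pickVar, dif_pos hne]⟩

lemma coeff_X_mul' (k : σ) (u : MvPowerSeries σ ℂ) (μ : σ →₀ ℕ) :
    MvPowerSeries.coeff μ (X k * u) =
      if Finsupp.single k 1 ≤ μ then MvPowerSeries.coeff (μ - Finsupp.single k 1) u else 0 := by
  classical
  rw [MvPowerSeries.coeff_mul]
  by_cases hle : Finsupp.single k 1 ≤ μ
  · rw [if_pos hle]
    refine Finset.sum_eq_single_of_mem (Finsupp.single k 1, μ - Finsupp.single k 1)
      (by rw [Finset.HasAntidiagonal.mem_antidiagonal]; exact add_tsub_cancel_of_le hle) ?_ |>.trans ?_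
    · intro p hp hpne
      rw [Finset.HasAntidiagonal.mem_antidiagonal] at hp
      rw [MvPowerSeries.coeff_X]
      by_cases h1 : p.1 = Finsupp.single k 1
      · exfalso
        apply hpne
        have h2 : p.2 = μ - Finsupp.single k 1 := by
          rw [← hp, h1, add_tsub_cancel_left]
        exact Prod.ext h1 h2
      · rw [if_neg h1, zero_mul]
    · rw [MvPowerSeries.coeff_X, if_pos rfl, one_mul]
  · rw [if_neg hle]
    apply Finset.sum_eq_zero
    intro p hp
    rw [Finset.HasAntidiagonal.mem_antidiagonal] at hp
    rw [MvPowerSeries.coeff_X]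
    by_cases h1 : p.1 = Finsupp.single k 1
    · exfalso
      apply hle
      rw [← hp, h1]
      exact le_add_of_nonneg_right zero_le
    · rw [if_neg h1, zero_mul]

/-- The maximal ideal generated by the variables. -/
noncomputable abbrev mIdeal (σ : Type*) : Ideal (MvPowerSeries σ ℂ) :=
  Ideal.span (Set.range (X : σ → MvPowerSeries σ ℂ))

lemma mem_pow_of_coeff_eq_zero [Fintype σ] (N : ℕ) (r : MvPowerSeries σ ℂ)
    (hr : ∀ μ, degE μ < N → MvPowerSeries.coeff μ r = 0) : r ∈ (mIdeal σ) ^ N := by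
  classical
  induction N generalizing r with
  | zero => simp
  | succ N IH =>
    set s : σ → MvPowerSeries σ ℂ := fun k μ =>
      if pickVar (μ + Finsupp.single k 1) = some k
      then MvPowerSeries.coeff (μ + Finsupp.single k 1) r else 0 with hs
    have hcoeff_s : ∀ k μ, MvPowerSeries.coeff μ (s k) =
        if pickVar (μ + Finsupp.single k 1) = some k
        then MvPowerSeries.coeff (μ + Finsupp.single k 1) r else 0 := fun k μ => rfl
    have hrs : r = ∑ k : σ, X k * s k := by
      apply MvPowerSeries.ext
      intro μ
      rw [map_sum]
      by_cases hμ : μ = 0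
      · subst hμ
        rw [hr 0 (by rw [degE_zero]; omega)]
        symm
        apply Finset.sum_eq_zero
        intro k _
        rw [coeff_X_mul', if_neg]
        rw [Finsupp.single_le_iff]
        simp
      · obtain ⟨k₀, hk₀⟩ := pickVar_ne_none hμ
        have hk₀ne := pickVar_spec hk₀
        have hle₀ : Finsupp.single k₀ 1 ≤ μ := by
          rw [Finsupp.single_le_iff]; omega
        symm
        refine Finset.sum_eq_single_of_mem k₀ (Finset.mem_univ k₀) ?_ |>.trans ?_
        · intro k _ hkne
          rw [coeff_X_mul']
          by_cases hle : Finsupp.single k 1 ≤ μ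
          · rw [if_pos hle, hcoeff_s, tsub_add_cancel_of_le hle, hk₀,
              if_neg (fun hh => hkne (Option.some_inj.mp hh).symm)]
          · rw [if_neg hle]
        · rw [coeff_X_mul', if_pos hle₀, hcoeff_s, tsub_add_cancel_of_le hle₀, hk₀, if_pos rfl]
    have hsk : ∀ k, s k ∈ (mIdeal σ) ^ N := by
      intro k
      apply IH
      intro μ hμ
      rw [hcoeff_s]
      by_cases hcase : pickVar (μ + Finsupp.single k 1) = some k
      · rw [if_pos hcase]
        apply hr
        rw [degE_add, degE_single_one]
        omega
      · rw [if_neg hcase]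
    rw [hrs, pow_succ']
    apply Submodule.sum_mem
    intro k _
    exact Ideal.mul_mem_mul (Ideal.subset_span ⟨k, rfl⟩) (hsk k)

lemma coeff_eq_zero_of_mem_pow [Fintype σ] (N : ℕ) (f : MvPowerSeries σ ℂ)
    (hf : f ∈ (mIdeal σ) ^ N) : ∀ μ, degE μ < N → MvPowerSeries.coeff μ f = 0 := by
  classical
  induction N generalizing f with
  | zero => intro μ hμ; omega
  | succ N IH =>
    rw [pow_succ'] at hf
    refine Submodule.mul_induction_on hf ?_ ?_
    · intro a ha b hb μ hμ
      rw [MvPowerSeries.coeff_mul]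
      apply Finset.sum_eq_zero
      intro p hp
      rw [Finset.HasAntidiagonal.mem_antidiagonal] at hp
      by_cases h1 : p.1 = 0
      · have hker : ∀ x ∈ mIdeal σ, MvPowerSeries.constantCoeff (σ := σ) (R := ℂ) x = 0 := by
          intro x hx
          have : mIdeal σ ≤ RingHom.ker (MvPowerSeries.constantCoeff (σ := σ) (R := ℂ)) := by
            rw [Ideal.span_le]
            rintro _ ⟨k, rfl⟩
            exact MvPowerSeries.constantCoeff_X k
          exact this hx
        have : MvPowerSeries.coeff p.1 a = 0 := by
          rw [h1]
          rw [show (MvPowerSeries.coeff 0 a) = MvPowerSeries.constantCoeff (σ := σ) (R := ℂ) a from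
            congrFun MvPowerSeries.coeff_zero_eq_constantCoeff a]
          exact hker a ha
        rw [this, zero_mul]
      · have hd1 : 1 ≤ degE p.1 := by
          by_contra hcon
          exact h1 (eq_zero_of_degE p.1 (by omega))
        have hd2 : degE p.2 < N := by
          have := congrArg degE hp
          rw [degE_add] at this
          omega
        rw [IH b hb p.2 hd2, mul_zero]
    · intro x y hx hy μ hμ
      rw [map_add, hx μ hμ, hy μ hμ, add_zero]

lemma derivation_mem_pow [Fintype σ] (δ : Derivation ℂ (MvPowerSeries σ ℂ) (MvPowerSeries σ ℂ))
    (N : ℕ) (f : MvPowerSeries σ ℂ) (hf : f ∈ (mIdeal σ) ^ (N + 1)) : δ f ∈ (mIdeal σ) ^ N := by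
  classical
  induction N generalizing f with
  | zero => simp [Ideal.one_eq_top]
  | succ N IH =>
    rw [pow_succ'] at hf
    refine Submodule.mul_induction_on hf ?_ ?_
    · intro a ha b hb
      rw [Derivation.leibniz, smul_eq_mul, smul_eq_mul]
      apply Submodule.add_mem
      · rw [pow_succ']
        exact Ideal.mul_mem_mul ha (IH b hb)
      · exact Ideal.mul_mem_right (δ a) _ hb
    · intro x y hx hy
      rw [map_add]
      exact Submodule.add_mem _ hx hy

lemma derivation_monomial_eq_zero (δ : Derivation ℂ (MvPowerSeries σ ℂ) (MvPowerSeries σ ℂ))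
    (hX : ∀ k, δ (X k) = 0) (μ : σ →₀ ℕ) (c : ℂ) :
    δ (MvPowerSeries.monomial μ c) = 0 := by
  classical
  have hpow : ∀ (k : σ) (e : ℕ), δ ((X k : MvPowerSeries σ ℂ) ^ e) = 0 := by
    intro k e
    rw [Derivation.leibniz_pow, hX, smul_zero, smul_zero]
  have hprod : ∀ t : Finset σ, δ (∏ k ∈ t, (X k : MvPowerSeries σ ℂ) ^ μ k) = 0 := by
    intro t
    induction t using Finset.induction_on with
    | empty => rw [Finset.prod_empty]; exact Derivation.map_one_eq_zero δ
    | @insert _ _ hnotmem ihp =>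
      rw [Finset.prod_insert hnotmem, Derivation.leibniz, hpow, ihp, smul_zero, smul_zero,
        add_zero]
  have hmono : ∀ t : Finset σ, (∏ k ∈ t, (X k : MvPowerSeries σ ℂ) ^ μ k)
      = MvPowerSeries.monomial (∑ k ∈ t, Finsupp.single k (μ k)) 1 := by
    intro t
    induction t using Finset.induction_on with
    | empty => rw [Finset.prod_empty, Finset.sum_empty, MvPowerSeries.monomial_zero_one]
    | @insert _ _ hnotmem ihp =>
      rw [Finset.prod_insert hnotmem, Finset.sum_insert hnotmem, ihp,
        MvPowerSeries.X_pow_eq, MvPowerSeries.monomial_mul_monomial, one_mul]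
  have hsupp : ∑ k ∈ μ.support, Finsupp.single k (μ k) = μ := Finsupp.sum_single μ
  have h1 : MvPowerSeries.monomial μ (1 : ℂ) = ∏ k ∈ μ.support, (X k : MvPowerSeries σ ℂ) ^ μ k := by
    rw [hmono, hsupp]
  have hc : MvPowerSeries.monomial μ c = c • MvPowerSeries.monomial μ (1 : ℂ) := by
    rw [← map_smul, smul_eq_mul, mul_one]
  rw [hc, Derivation.map_smul, h1, hprod, smul_zero]

/-- A derivation of the power series ring vanishing on all variables is zero. -/
theorem derivation_eq_zero_of_forall_X [Fintype σ]
    (δ : Derivation ℂ (MvPowerSeries σ ℂ) (MvPowerSeries σ ℂ))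
    (hX : ∀ k, δ (X k) = 0) : δ = 0 := by
  classical
  refine Derivation.ext fun f => ?_
  show δ f = 0
  apply MvPowerSeries.ext
  intro ν
  rw [map_zero]
  set N : ℕ := degE ν + 2 with hN
  set b : σ →₀ ℕ := Finsupp.equivFunOnFinite.symm (fun _ => N) with hb
  set P : MvPowerSeries σ ℂ := ∑ μ ∈ Finset.Iic b, MvPowerSeries.monomial μ
    (MvPowerSeries.coeff μ f) with hP
  have hδP : δ P = 0 := by
    rw [hP, map_sum]
    apply Finset.sum_eq_zero
    intro μ _
    exact derivation_monomial_eq_zero δ hX μ _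
  have hrmem : f - P ∈ (mIdeal σ) ^ N := by
    apply mem_pow_of_coeff_eq_zero
    intro μ hμ
    rw [map_sub]
    have hμb : μ ∈ Finset.Iic b := by
      rw [Finset.mem_Iic, Finsupp.le_def]
      intro k
      have := apply_le_degE μ k
      simp only [hb, Finsupp.coe_equivFunOnFinite_symm]
      omega
    have hcoeffP : MvPowerSeries.coeff μ P = MvPowerSeries.coeff μ f := by
      rw [hP, map_sum]
      rw [Finset.sum_congr rfl (fun μ' _ => MvPowerSeries.coeff_monomial μ μ' _),
        Finset.sum_ite_eq, if_pos hμb]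
    rw [hcoeffP, sub_self]
  have hsplit : δ f = δ (f - P) := by
    have : f = P + (f - P) := by ring
    conv_lhs => rw [this]
    rw [map_add, hδP, zero_add]
  rw [hsplit]
  have hmem2 : δ (f - P) ∈ (mIdeal σ) ^ (degE ν + 1) :=
    derivation_mem_pow δ (degE ν + 1) (f - P) (by rw [← hN]; exact hrmem)
  exact coeff_eq_zero_of_mem_pow (degE ν + 1) _ hmem2 ν (by omega)

end Core


namespace LogDerAux

variable {σ₀ P Q : Type*} [DecidableEq σ₀] [DecidableEq P] [DecidableEq Q]

variable (E : (σ₀ →₀ ℕ) ≃+ (P →₀ ℕ) × (Q →₀ ℕ))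

lemma symm_pair (a : P →₀ ℕ) (b : Q →₀ ℕ) :
    E.symm (a, b) = E.symm (a, 0) + E.symm (0, b) := by
  rw [← map_add]
  congr 1
  simp [Prod.ext_iff]

/-- Key antidiagonal computation: coefficient of a product with a "pure first block" factor. -/
lemma coeff_mul_pureFst (g u : MvPowerSeries σ₀ ℂ)
    (hg : ∀ ν, (E ν).2 ≠ 0 → MvPowerSeries.coeff ν g = 0) (ν : σ₀ →₀ ℕ) :
    MvPowerSeries.coeff ν (g * u) = ∑ p ∈ antidiagonal (E ν).1,
      MvPowerSeries.coeff (E.symm (p.1, 0)) g *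
        MvPowerSeries.coeff (E.symm (p.2, (E ν).2)) u := by
  classical
  rw [MvPowerSeries.coeff_mul]
  rw [← Finset.sum_filter_of_ne (p := fun p : (σ₀ →₀ ℕ) × (σ₀ →₀ ℕ) => (E p.1).2 = 0)
    (by
      intro p _ hne
      by_contra hz
      exact hne (by rw [hg p.1 hz, zero_mul]))]
  refine Finset.sum_nbij' (fun p => ((E p.1).1, (E p.2).1))
    (fun q => (E.symm (q.1, 0), E.symm (q.2, (E ν).2))) ?_ ?_ ?_ ?_ ?_
  · intro p hp
    simp only [Finset.mem_filter, Finset.HasAntidiagonal.mem_antidiagonal] at hp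
    rw [Finset.HasAntidiagonal.mem_antidiagonal]
    have := congrArg (fun t => (E t).1) hp.1
    simpa [map_add] using this
  · intro q hq
    rw [Finset.HasAntidiagonal.mem_antidiagonal] at hq
    simp only [Finset.mem_filter, Finset.HasAntidiagonal.mem_antidiagonal]
    constructor
    · rw [← map_add]
      have : (q.1, (0 : Q →₀ ℕ)) + (q.2, (E ν).2) = E ν := by
        rw [Prod.mk_add_mk, zero_add, hq]
      rw [this, AddEquiv.symm_apply_apply]
    · simp
  · intro p hp
    simp only [Finset.mem_filter, Finset.HasAntidiagonal.mem_antidiagonal] at hp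
    obtain ⟨hsum, hz⟩ := hp
    have h2 : (E p.2).2 = (E ν).2 := by
      have := congrArg (fun t => (E t).2) hsum
      simpa [map_add, hz] using this
    ext <;> simp [← hz, ← h2]
  · intro q _
    simp
  · intro p hp
    simp only [Finset.mem_filter, Finset.HasAntidiagonal.mem_antidiagonal] at hp
    obtain ⟨hsum, hz⟩ := hp
    have h2 : (E p.2).2 = (E ν).2 := by
      have := congrArg (fun t => (E t).2) hsum
      simpa [map_add, hz] using this
    have e1 : E.symm ((E p.1).1, (0 : Q →₀ ℕ)) = p.1 := by
      rw [← hz]; exact E.symm_apply_apply p.1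
    have e2 : E.symm ((E p.2).1, (E ν).2) = p.2 := by
      rw [← h2]; exact E.symm_apply_apply p.2
    rw [e1, e2]

/-- Slice of a power series along the second block of exponents. -/
noncomputable def sliceE (μ : Q →₀ ℕ) (w : MvPowerSeries σ₀ ℂ) : MvPowerSeries σ₀ ℂ :=
  fun ν => if (E ν).2 = 0 then MvPowerSeries.coeff (ν + E.symm (0, μ)) w else 0

lemma coeff_sliceE (μ : Q →₀ ℕ) (w : MvPowerSeries σ₀ ℂ) (ν : σ₀ →₀ ℕ) :
    MvPowerSeries.coeff ν (sliceE E μ w) =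
      if (E ν).2 = 0 then MvPowerSeries.coeff (ν + E.symm (0, μ)) w else 0 := rfl

lemma coeff_eq_coeff_sliceE (w : MvPowerSeries σ₀ ℂ) (ν : σ₀ →₀ ℕ) :
    MvPowerSeries.coeff ν w =
      MvPowerSeries.coeff (E.symm ((E ν).1, 0)) (sliceE E (E ν).2 w) := by
  rw [coeff_sliceE]
  have h0 : (E (E.symm ((E ν).1, (0 : Q →₀ ℕ)))).2 = 0 := by
    rw [AddEquiv.apply_symm_apply]
  rw [if_pos h0, ← symm_pair]
  simp

lemma sliceE_mul_pureFst (g u : MvPowerSeries σ₀ ℂ)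
    (hg : ∀ ν, (E ν).2 ≠ 0 → MvPowerSeries.coeff ν g = 0) (μ : Q →₀ ℕ) :
    sliceE E μ (g * u) = g * sliceE E μ u := by
  apply MvPowerSeries.ext
  intro ν
  rw [coeff_sliceE, coeff_mul_pureFst E g (sliceE E μ u) hg ν]
  by_cases h0 : (E ν).2 = 0
  · rw [if_pos h0]
    have hEν : (E (ν + E.symm (0, μ))).1 = (E ν).1 ∧ (E (ν + E.symm (0, μ))).2 = μ := by
      rw [map_add, AddEquiv.apply_symm_apply]
      constructor <;> simp [h0]
    rw [coeff_mul_pureFst E g u hg (ν + E.symm (0, μ)), hEν.1, hEν.2]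
    refine Finset.sum_congr rfl ?_
    intro p _
    congr 1
    rw [coeff_sliceE]
    have : (E (E.symm (p.2, (E ν).2))).2 = 0 := by rw [AddEquiv.apply_symm_apply, h0]
    rw [if_pos this]
    congr 1
    rw [h0, symm_pair E p.2 (0 : Q →₀ ℕ)]
    simp [add_assoc, ← symm_pair]
  · rw [if_neg h0]
    symm
    apply Finset.sum_eq_zero
    intro p _
    rw [coeff_sliceE]
    have : (E (E.symm (p.2, (E ν).2))).2 = (E ν).2 := by rw [AddEquiv.apply_symm_apply]
    rw [if_neg (by rw [this]; exact h0), mul_zero]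


lemma coeff_mul_pureSnd (h w : MvPowerSeries σ₀ ℂ)
    (hh : ∀ ν, (E ν).1 ≠ 0 → MvPowerSeries.coeff ν h = 0) (ν : σ₀ →₀ ℕ) :
    MvPowerSeries.coeff ν (h * w) = ∑ p ∈ antidiagonal (E ν).2,
      MvPowerSeries.coeff (E.symm (0, p.1)) h *
        MvPowerSeries.coeff (E.symm ((E ν).1, p.2)) w := by
  exact coeff_mul_pureFst (E.trans AddEquiv.prodComm) h w hh ν

lemma sliceE_mul_pureSnd (h w : MvPowerSeries σ₀ ℂ)
    (hh : ∀ ν, (E ν).1 ≠ 0 → MvPowerSeries.coeff ν h = 0) (μ : Q →₀ ℕ) :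
    sliceE E μ (h * w) = ∑ p ∈ antidiagonal μ,
      (MvPowerSeries.coeff (E.symm (0, p.1)) h) • sliceE E p.2 w := by
  apply MvPowerSeries.ext
  intro ν
  rw [coeff_sliceE, map_sum]
  by_cases h0 : (E ν).2 = 0
  · rw [if_pos h0]
    have hEν : (E (ν + E.symm (0, μ))).1 = (E ν).1 ∧ (E (ν + E.symm (0, μ))).2 = μ := by
      rw [map_add, AddEquiv.apply_symm_apply]
      constructor <;> simp [h0]
    rw [coeff_mul_pureSnd E h w hh (ν + E.symm (0, μ)), hEν.1, hEν.2]
    refine Finset.sum_congr rfl ?_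
    intro p _
    rw [map_smul, coeff_sliceE, if_pos h0, smul_eq_mul]
    congr 2
    have hν : ν = E.symm ((E ν).1, 0) := by rw [← h0]; exact (E.symm_apply_apply ν).symm
    rw [hν, ← symm_pair]
    simp [← symm_pair, zero_add]
  · rw [if_neg h0]
    symm
    apply Finset.sum_eq_zero
    intro p _
    rw [map_smul, coeff_sliceE, if_neg h0, smul_zero]

lemma dvd_of_sliceE_dvd (g w : MvPowerSeries σ₀ ℂ)
    (hg : ∀ ν, (E ν).2 ≠ 0 → MvPowerSeries.coeff ν g = 0)
    (hdvd : ∀ μ : Q →₀ ℕ, g ∣ sliceE E μ w) : g ∣ w := by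
  choose v hv using hdvd
  refine ⟨fun ν => MvPowerSeries.coeff (E.symm ((E ν).1, 0)) (v (E ν).2), ?_⟩
  apply MvPowerSeries.ext
  intro ν
  rw [coeff_eq_coeff_sliceE E w ν, hv (E ν).2]
  have hEx : (E (E.symm ((E ν).1, (0 : Q →₀ ℕ)))) = ((E ν).1, (0 : Q →₀ ℕ)) :=
    E.apply_symm_apply _
  rw [coeff_mul_pureFst E g (v (E ν).2) hg (E.symm ((E ν).1, 0)),
    coeff_mul_pureFst E g (fun ν => MvPowerSeries.coeff (E.symm ((E ν).1, 0)) (v (E ν).2) : MvPowerSeries σ₀ ℂ) hg ν]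
  rw [hEx]
  refine Finset.sum_congr rfl ?_
  intro p _
  congr 1
  show MvPowerSeries.coeff (E.symm (p.2, (0:Q →₀ ℕ))) (v (E ν).2)
      = MvPowerSeries.coeff (E.symm ((E (E.symm (p.2, (E ν).2))).1, 0))
          (v (E (E.symm (p.2, (E ν).2))).2)
  rw [E.apply_symm_apply]

/-- The key divisibility lemma: if `g` involves only the first block of variables and `h ≠ 0`
involves only the second block, then `g ∣ h * w → g ∣ w`. -/
lemma dvd_of_dvd_mul_pure [LinearOrder Q] [WellFoundedGT Q] (g h w : MvPowerSeries σ₀ ℂ)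
    (hg : ∀ ν, (E ν).2 ≠ 0 → MvPowerSeries.coeff ν g = 0)
    (hh : ∀ ν, (E ν).1 ≠ 0 → MvPowerSeries.coeff ν h = 0)
    (hne : h ≠ 0) (hdvd : g ∣ h * w) : g ∣ w := by
  classical
  obtain ⟨q, hq⟩ := hdvd
  have wf : WellFounded ((· < ·) : Lex (Q →₀ ℕ) → Lex (Q →₀ ℕ) → Prop) :=
    (Finsupp.Lex.wellFoundedLT).wf
  set T : Set (Lex (Q →₀ ℕ)) :=
    {μ | MvPowerSeries.coeff (E.symm (0, ofLex μ)) h ≠ 0} with hT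
  have hTne : T.Nonempty := by
    by_contra hemp
    apply hne
    apply MvPowerSeries.ext
    intro ρ
    rw [map_zero]
    by_cases h1 : (E ρ).1 = 0
    · by_contra hc
      apply hemp
      refine ⟨toLex (E ρ).2, ?_⟩
      show MvPowerSeries.coeff (E.symm (0, (E ρ).2)) h ≠ 0
      rw [show ((0 : P →₀ ℕ), (E ρ).2) = E ρ by rw [← h1], E.symm_apply_apply]
      exact hc
    · exact hh ρ h1
  have hμ₀T : wf.min T hTne ∈ T := wf.min_mem T hTne
  set μ₀ : Lex (Q →₀ ℕ) := wf.min T hTne with hμ₀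
  have hμ₀min : ∀ μ ∈ T, ¬ μ < μ₀ := fun μ hμ => wf.not_lt_min T hμ
  have hc₀ne : MvPowerSeries.coeff (E.symm (0, ofLex μ₀)) h ≠ 0 := hμ₀T
  have main : ∀ μ : Lex (Q →₀ ℕ), g ∣ sliceE E (ofLex μ) w := by
    intro μ
    induction μ using wf.induction with
    | _ μ IH =>
      have hslice := sliceE_mul_pureSnd E h w hh (ofLex μ₀ + ofLex μ)
      rw [hq, sliceE_mul_pureFst E g q hg] at hslice
      have hmem : ((ofLex μ₀ : Q →₀ ℕ), (ofLex μ : Q →₀ ℕ)) ∈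
          antidiagonal ((ofLex μ₀ : Q →₀ ℕ) + ofLex μ) := by
        rw [Finset.HasAntidiagonal.mem_antidiagonal]
      rw [← Finset.add_sum_erase _ _ hmem] at hslice
      dsimp only at hslice
      have hrest : g ∣ ∑ p ∈ (antidiagonal ((ofLex μ₀ : Q →₀ ℕ) + ofLex μ)).erase
          ((ofLex μ₀ : Q →₀ ℕ), (ofLex μ : Q →₀ ℕ)),
          (MvPowerSeries.coeff (E.symm (0, p.1)) h) • sliceE E p.2 w := by
        apply Finset.dvd_sum
        intro p hp
        obtain ⟨hpne, hpmem⟩ := Finset.mem_erase.mp hp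
        rw [Finset.HasAntidiagonal.mem_antidiagonal] at hpmem
        by_cases hc : MvPowerSeries.coeff (E.symm (0, p.1)) h = 0
        · rw [hc, zero_smul]
          exact dvd_zero g
        · have hp1T : toLex p.1 ∈ T := hc
          have hlt : toLex p.2 < μ := by
            have hle : ¬ toLex p.1 < μ₀ := hμ₀min _ hp1T
            have hne2 : toLex p.1 ≠ μ₀ := by
              intro hequ
              apply hpne
              have h1 : p.1 = ofLex μ₀ := congrArg ofLex hequ
              have hp2 : p.2 = ofLex μ := by
                rw [h1] at hpmem
                exact add_left_cancel hpmem
              exact Prod.ext h1 hp2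
            have hgt : μ₀ < toLex p.1 := lt_of_le_of_ne (not_lt.mp hle) (Ne.symm hne2)
            have hadd : (μ₀ : Lex (Q →₀ ℕ)) + toLex p.2 < toLex p.1 + toLex p.2 :=
              add_lt_add_of_lt_of_le hgt le_rfl
            have heqsum : (toLex p.1 : Lex (Q →₀ ℕ)) + toLex p.2 = μ₀ + μ := by
              show toLex (p.1 + p.2) = toLex (ofLex μ₀ + ofLex μ)
              rw [hpmem]
            rw [heqsum] at hadd
            exact lt_of_add_lt_add_left hadd
          have := IH _ hlt
          rw [MvPowerSeries.smul_eq_C_mul]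
          exact Dvd.dvd.mul_left this _
      have hdvd1 : g ∣ (MvPowerSeries.coeff (E.symm (0, ofLex μ₀)) h) •
          sliceE E (ofLex μ) w := by
        rw [eq_sub_of_add_eq hslice.symm]
        exact dvd_sub (Dvd.intro _ rfl) hrest
      have hfin : sliceE E (ofLex μ) w =
          (MvPowerSeries.coeff (E.symm (0, ofLex μ₀)) h)⁻¹ •
            ((MvPowerSeries.coeff (E.symm (0, ofLex μ₀)) h) • sliceE E (ofLex μ) w) := by
        rw [smul_smul, inv_mul_cancel₀ hc₀ne, one_smul]
      rw [hfin, MvPowerSeries.smul_eq_C_mul]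
      exact Dvd.dvd.mul_left hdvd1 _
  exact dvd_of_sliceE_dvd E g w hg (fun μ => main (toLex μ))

end LogDerAux



/-- Splitting of logarithmic derivations for separated variables: if `g` depends only on the
`x`-variables and `h` only on the `y`-variables (both reduced), then `Der(log gh)` is the
direct sum of the submodule of derivations lying in the span of the `∂ₓ`'s that preserve `(g)`
and the submodule of derivations lying in the span of the `∂_y`'s that preserve `(h)`. -/
theorem logDer_splitting {n m : ℕ} (g h : MvPowerSeries (Fin n ⊕ Fin m) ℂ)
    (hgx : DependsOnlyOn (Set.range (Sum.inl : Fin n → Fin n ⊕ Fin m)) g)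
    (hhy : DependsOnlyOn (Set.range (Sum.inr : Fin m → Fin n ⊕ Fin m)) h)
    (hg : Squarefree g) (hh : Squarefree h) :
    (Submodule.span (MvPowerSeries (Fin n ⊕ Fin m) ℂ)
        (Set.range fun i : Fin n => (pderivD (Sum.inl i) :
          Derivation ℂ (MvPowerSeries (Fin n ⊕ Fin m) ℂ) (MvPowerSeries (Fin n ⊕ Fin m) ℂ)))
        ⊓ logDer g)
      ⊓ (Submodule.span (MvPowerSeries (Fin n ⊕ Fin m) ℂ)
        (Set.range fun j : Fin m => (pderivD (Sum.inr j) :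
          Derivation ℂ (MvPowerSeries (Fin n ⊕ Fin m) ℂ) (MvPowerSeries (Fin n ⊕ Fin m) ℂ)))
        ⊓ logDer h) = ⊥
    ∧
    (Submodule.span (MvPowerSeries (Fin n ⊕ Fin m) ℂ)
        (Set.range fun i : Fin n => (pderivD (Sum.inl i) :
          Derivation ℂ (MvPowerSeries (Fin n ⊕ Fin m) ℂ) (MvPowerSeries (Fin n ⊕ Fin m) ℂ)))
        ⊓ logDer g)
      ⊔ (Submodule.span (MvPowerSeries (Fin n ⊕ Fin m) ℂ)
        (Set.range fun j : Fin m => (pderivD (Sum.inr j) :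
          Derivation ℂ (MvPowerSeries (Fin n ⊕ Fin m) ℂ) (MvPowerSeries (Fin n ⊕ Fin m) ℂ)))
        ⊓ logDer h) = logDer (g * h) := by
  classical
  let E₀ : ((Fin n ⊕ Fin m) →₀ ℕ) ≃+ (Fin n →₀ ℕ) × (Fin m →₀ ℕ) :=
    Finsupp.sumFinsuppAddEquivProdFinsupp
  have hgE : ∀ ν, (E₀ ν).2 ≠ 0 → MvPowerSeries.coeff ν g = 0 := by
    intro ν hν
    obtain ⟨j, hj⟩ := Finsupp.ne_iff.mp hν
    refine hgx ν ⟨Sum.inr j, by simp, ?_⟩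
    rw [show ν (Sum.inr j) = (E₀ ν).2 j from
      (Finsupp.snd_sumFinsuppAddEquivProdFinsupp ν j).symm]
    simpa using hj
  have hhE : ∀ ν, (E₀ ν).1 ≠ 0 → MvPowerSeries.coeff ν h = 0 := by
    intro ν hν
    obtain ⟨i, hi⟩ := Finsupp.ne_iff.mp hν
    refine hhy ν ⟨Sum.inl i, by simp, ?_⟩
    rw [show ν (Sum.inl i) = (E₀ ν).1 i from
      (Finsupp.fst_sumFinsuppAddEquivProdFinsupp ν i).symm]
    simpa using hi
  have hg0 : g ≠ 0 := hg.ne_zero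
  have hh0 : h ≠ 0 := hh.ne_zero
  have hpd_inl_h : ∀ i : Fin n,
      (pderivD (Sum.inl i) : Derivation ℂ (MvPowerSeries (Fin n ⊕ Fin m) ℂ) (MvPowerSeries (Fin n ⊕ Fin m) ℂ)) h = 0 := by
    intro i
    show pderiv (Sum.inl i) h = 0
    exact pderiv_eq_zero_of_dependsOnlyOn _ _ h hhy (by simp)
  have hpd_inr_g : ∀ j : Fin m,
      (pderivD (Sum.inr j) : Derivation ℂ (MvPowerSeries (Fin n ⊕ Fin m) ℂ) (MvPowerSeries (Fin n ⊕ Fin m) ℂ)) g = 0 := by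
    intro j
    show pderiv (Sum.inr j) g = 0
    exact pderiv_eq_zero_of_dependsOnlyOn _ _ g hgx (by simp)
  have mem_logDer : ∀ (f : MvPowerSeries (Fin n ⊕ Fin m) ℂ) (δ : Derivation ℂ (MvPowerSeries (Fin n ⊕ Fin m) ℂ) (MvPowerSeries (Fin n ⊕ Fin m) ℂ)),
      δ ∈ logDer f ↔ δ f ∈ Ideal.span {f} := fun f δ => Iff.rfl
  constructor
  · -- trivial intersection
    rw [eq_bot_iff]
    intro δ hδ
    rw [Submodule.mem_inf, Submodule.mem_inf, Submodule.mem_inf] at hδ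
    obtain ⟨⟨h1span, _⟩, ⟨h2span, _⟩⟩ := hδ
    have hrep := eq_sum_of_mem_span Sum.inl Sum.inl_injective h1span
    have hval : ∀ i : Fin n, δ (X (Sum.inl i)) = 0 := by
      intro i
      refine apply_eq_zero_of_mem_span _ _ ?_ h2span
      rintro d ⟨j, rfl⟩
      show pderiv (Sum.inr j) (X (Sum.inl i)) = 0
      rw [_root_.pderiv_X, if_neg (by simp)]
    rw [Submodule.mem_bot, hrep]
    apply Finset.sum_eq_zero
    intro i _
    rw [hval i, zero_smul]
  · -- sup equals logDer (g * h)
    apply le_antisymm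
    · apply sup_le
      · intro δ hδ
        rw [Submodule.mem_inf] at hδ
        obtain ⟨hspan, hlog⟩ := hδ
        rw [mem_logDer] at hlog ⊢
        obtain ⟨c, hc⟩ := Ideal.mem_span_singleton.mp hlog
        have hδh : δ h = 0 := by
          refine apply_eq_zero_of_mem_span _ _ ?_ hspan
          rintro d ⟨i, rfl⟩
          exact hpd_inl_h i
        rw [Derivation.leibniz, hδh, smul_zero, zero_add, smul_eq_mul,
          Ideal.mem_span_singleton]
        exact ⟨c, by rw [hc]; ring⟩
      · intro δ hδ
        rw [Submodule.mem_inf] at hδ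
        obtain ⟨hspan, hlog⟩ := hδ
        rw [mem_logDer] at hlog ⊢
        obtain ⟨c, hc⟩ := Ideal.mem_span_singleton.mp hlog
        have hδg : δ g = 0 := by
          refine apply_eq_zero_of_mem_span _ _ ?_ hspan
          rintro d ⟨j, rfl⟩
          exact hpd_inr_g j
        rw [Derivation.leibniz, hδg, smul_zero, add_zero, smul_eq_mul,
          Ideal.mem_span_singleton]
        exact ⟨c, by rw [hc]; ring⟩
    · intro δ hδ
      rw [mem_logDer] at hδ
      obtain ⟨c, hc⟩ := Ideal.mem_span_singleton.mp hδ
      set δ₁ : Derivation ℂ (MvPowerSeries (Fin n ⊕ Fin m) ℂ) (MvPowerSeries (Fin n ⊕ Fin m) ℂ) :=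
        ∑ i : Fin n, (δ (X (Sum.inl i)) : MvPowerSeries (Fin n ⊕ Fin m) ℂ) • pderivD (Sum.inl i) with hδ₁def
      set δ₂ : Derivation ℂ (MvPowerSeries (Fin n ⊕ Fin m) ℂ) (MvPowerSeries (Fin n ⊕ Fin m) ℂ) :=
        ∑ j : Fin m, (δ (X (Sum.inr j)) : MvPowerSeries (Fin n ⊕ Fin m) ℂ) • pderivD (Sum.inr j) with hδ₂def
      have hδ₁mem : δ₁ ∈ Submodule.span (MvPowerSeries (Fin n ⊕ Fin m) ℂ)
          (Set.range fun i : Fin n => (pderivD (Sum.inl i) : Derivation ℂ (MvPowerSeries (Fin n ⊕ Fin m) ℂ) (MvPowerSeries (Fin n ⊕ Fin m) ℂ))) :=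
        Submodule.sum_mem _ fun i _ =>
          Submodule.smul_mem _ _ (Submodule.subset_span ⟨i, rfl⟩)
      have hδ₂mem : δ₂ ∈ Submodule.span (MvPowerSeries (Fin n ⊕ Fin m) ℂ)
          (Set.range fun j : Fin m => (pderivD (Sum.inr j) : Derivation ℂ (MvPowerSeries (Fin n ⊕ Fin m) ℂ) (MvPowerSeries (Fin n ⊕ Fin m) ℂ))) :=
        Submodule.sum_mem _ fun j _ =>
          Submodule.smul_mem _ _ (Submodule.subset_span ⟨j, rfl⟩)
      -- evaluation of the candidate pieces on variables
      have hsum_apply : ∀ {ι : Type} [Fintype ι] (v : ι → Fin n ⊕ Fin m)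
          (a : ι → MvPowerSeries (Fin n ⊕ Fin m) ℂ) (x : MvPowerSeries (Fin n ⊕ Fin m) ℂ),
          ((∑ i : ι, (a i) • pderivD (v i) : Derivation ℂ (MvPowerSeries (Fin n ⊕ Fin m) ℂ) (MvPowerSeries (Fin n ⊕ Fin m) ℂ))) x
            = ∑ i : ι, (a i) * pderiv (v i) x := by
        intro ι _ v a x
        rw [show ((∑ i : ι, (a i) • pderivD (v i) : Derivation ℂ (MvPowerSeries (Fin n ⊕ Fin m) ℂ) (MvPowerSeries (Fin n ⊕ Fin m) ℂ))) x
          = evalD x (∑ i : ι, (a i) • pderivD (v i)) from rfl, map_sum]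
        exact Finset.sum_congr rfl fun i _ => rfl
      have hδ₁X : ∀ i₀ : Fin n, δ₁ (X (Sum.inl i₀)) = δ (X (Sum.inl i₀)) := by
        intro i₀
        rw [hδ₁def, hsum_apply]
        have : ∀ i : Fin n, (δ (X (Sum.inl i)) : MvPowerSeries (Fin n ⊕ Fin m) ℂ) * pderiv (Sum.inl i) (X (Sum.inl i₀))
            = if i₀ = i then δ (X (Sum.inl i₀)) else 0 := by
          intro i
          rw [_root_.pderiv_X]
          by_cases hii : i₀ = i
          · subst hii; simp
          · rw [if_neg (fun hcon => hii (Sum.inl_injective hcon).symm), if_neg hii, mul_zero]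
        rw [Finset.sum_congr rfl fun i _ => this i, Finset.sum_ite_eq]
        simp
      have hδ₂X : ∀ j₀ : Fin m, δ₂ (X (Sum.inr j₀)) = δ (X (Sum.inr j₀)) := by
        intro j₀
        rw [hδ₂def, hsum_apply]
        have : ∀ j : Fin m, (δ (X (Sum.inr j)) : MvPowerSeries (Fin n ⊕ Fin m) ℂ) * pderiv (Sum.inr j) (X (Sum.inr j₀))
            = if j₀ = j then δ (X (Sum.inr j₀)) else 0 := by
          intro j
          rw [_root_.pderiv_X]
          by_cases hjj : j₀ = j
          · subst hjj; simp
          · rw [if_neg (fun hcon => hjj (Sum.inr_injective hcon).symm), if_neg hjj, mul_zero]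
        rw [Finset.sum_congr rfl fun j _ => this j, Finset.sum_ite_eq]
        simp
      have hδ₁Xr : ∀ j₀ : Fin m, δ₁ (X (Sum.inr j₀)) = 0 := by
        intro j₀
        rw [hδ₁def, hsum_apply]
        apply Finset.sum_eq_zero
        intro i _
        rw [_root_.pderiv_X, if_neg (by simp), mul_zero]
      have hδ₂Xl : ∀ i₀ : Fin n, δ₂ (X (Sum.inl i₀)) = 0 := by
        intro i₀
        rw [hδ₂def, hsum_apply]
        apply Finset.sum_eq_zero
        intro j _
        rw [_root_.pderiv_X, if_neg (by simp), mul_zero]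
      have hδsum : δ = δ₁ + δ₂ := by
        have hzero : δ - δ₁ - δ₂ = 0 := by
          apply derivation_eq_zero_of_forall_X
          intro k
          rw [Derivation.sub_apply, Derivation.sub_apply]
          cases k with
          | inl i => rw [hδ₁X i, hδ₂Xl i, sub_zero, sub_self]
          | inr j => rw [hδ₁Xr j, hδ₂X j, sub_zero, sub_self]
        rwa [sub_sub, sub_eq_zero] at hzero
      have hδ₁h : δ₁ h = 0 := by
        refine apply_eq_zero_of_mem_span _ _ ?_ hδ₁mem
        rintro d ⟨i, rfl⟩
        exact hpd_inl_h i
      have hδ₂g : δ₂ g = 0 := by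
        refine apply_eq_zero_of_mem_span _ _ ?_ hδ₂mem
        rintro d ⟨j, rfl⟩
        exact hpd_inr_g j
      have hδh : δ h = δ₂ h := by
        rw [hδsum, Derivation.add_apply, hδ₁h, zero_add]
      have hδg : δ g = δ₁ g := by
        rw [hδsum, Derivation.add_apply, hδ₂g, add_zero]
      have hmain : g * δ₂ h + h * δ₁ g = g * h * c := by
        rw [← hδh, ← hδg]
        have hlb : δ (g * h) = g * δ h + h * δ g := by
          rw [Derivation.leibniz, smul_eq_mul, smul_eq_mul]
        rw [← hlb, hc]
      have hdvd1 : g ∣ h * δ₁ g := ⟨h * c - δ₂ h, by linear_combination hmain⟩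
      have hdvd2 : h ∣ g * δ₂ h := ⟨g * c - δ₁ g, by linear_combination hmain⟩
      have hg_dvd : g ∣ δ₁ g :=
        LogDerAux.dvd_of_dvd_mul_pure E₀ g h (δ₁ g) hgE hhE hh0 hdvd1
      have hh_dvd : h ∣ δ₂ h :=
        LogDerAux.dvd_of_dvd_mul_pure (E₀.trans AddEquiv.prodComm) h g (δ₂ h)
          (fun ν hv => hhE ν hv) (fun ν hv => hgE ν hv) hg0 hdvd2
      rw [hδsum]
      refine Submodule.add_mem_sup ?_ ?_
      · rw [Submodule.mem_inf]
        exact ⟨hδ₁mem, Ideal.mem_span_singleton.mpr hg_dvd⟩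
      · rw [Submodule.mem_inf]
        exact ⟨hδ₂mem, Ideal.mem_span_singleton.mpr hh_dvd⟩
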